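/- Let $a<b$ be real, let $T_0:(a,b)\to M_n(\mathbb{C})$ be differentiable and $T_1,T_2,T_3:(a,b)\to M_n(\mathbb{C})$ be continuous, all skew-hermitian valued. Let $c,x_1,x_2,x_3\in\mathbb{R}$ and set $\gamma(z) = T_0(z) - ic$. Suppose $v:(a,b)\to\mathbb{C}^n$ is twice differentiable and satisfies $\bigl(\tfrac{d}{dz}+\gamma\bigr)^2 v + \sum_{j=1}^3 (T_j - ix_j)^2 v = 0$, where $(\tfrac{d}{dz}+\gamma)^2 v := (v'+\gamma v)' + \gamma(v'+\gamma v)$. Then for all $z\in(a,b)$: $\frac{d^2}{dz^2}\|v(z)\|^2 = 2\|v'(z)+\gamma(z)v(z)\|^2 + 2\sum_{j=1}^3\|(T_j(z)-ix_j)v(z)\|^2 \ge 0$; in particular $z\mapsto\|v(z)\|^2$ is convex. -/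

import Mathlib

open Matrix Set Complex

noncomputable def ipc {n : ℕ} (x y : Fin n → ℂ) : ℂ := ∑ i, (starRingEnd ℂ) (x i) * y i

lemma ipc_mulVec {n : ℕ} (M : Matrix (Fin n) (Fin n) ℂ) (x y : Fin n → ℂ) :
    ipc x (M *ᵥ y) = ipc (Mᴴ *ᵥ x) y := by
  simp only [ipc, mulVec, dotProduct, conjTranspose_apply, map_sum, _root_.map_mul,
    Finset.mul_sum, Finset.sum_mul, starRingEnd_apply, star_star]
  rw [Finset.sum_comm]
  congr 1; ext i; congr 1; ext j
  simp [StarMul.star_mul, star_star, mul_comm, mul_left_comm, mul_assoc]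

lemma ipc_skew {n : ℕ} {M : Matrix (Fin n) (Fin n) ℂ} (h : Mᴴ = -M) (x y : Fin n → ℂ) :
    ipc x (M *ᵥ y) = - ipc (M *ᵥ x) y := by
  rw [ipc_mulVec, h, neg_mulVec]
  simp [ipc]

lemma conj_ipc {n : ℕ} (x y : Fin n → ℂ) : (starRingEnd ℂ) (ipc x y) = ipc y x := by
  simp [ipc, map_sum, mul_comm]

lemma re_ipc_comm {n : ℕ} (x y : Fin n → ℂ) : (ipc x y).re = (ipc y x).re := by
  rw [← conj_ipc x y, Complex.conj_re]

lemma ipc_self {n : ℕ} (x : Fin n → ℂ) : ipc x x = ((∑ i, Complex.normSq (x i) : ℝ) : ℂ) := by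
  simp [ipc, Complex.normSq_eq_conj_mul_self, Complex.ofReal_sum]

lemma ipc_add_right {n : ℕ} (x y z : Fin n → ℂ) : ipc x (y + z) = ipc x y + ipc x z := by
  simp [ipc, mul_add, Finset.sum_add_distrib]

lemma ipc_add_left {n : ℕ} (x y z : Fin n → ℂ) : ipc (x + y) z = ipc x z + ipc y z := by
  simp [ipc, add_mul, Finset.sum_add_distrib]

lemma key_algebra {n : ℕ} (γ' γ A1 A2 A3 : Matrix (Fin n) (Fin n) ℂ)
    (hγ' : γ'ᴴ = -γ') (hγ : γᴴ = -γ) (h1 : A1ᴴ = -A1) (h2 : A2ᴴ = -A2) (h3 : A3ᴴ = -A3)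
    (u u' u'' : Fin n → ℂ)
    (hode : (u'' + γ' *ᵥ u + γ *ᵥ u') + γ *ᵥ (u' + γ *ᵥ u)
        + (A1 * A1) *ᵥ u + (A2 * A2) *ᵥ u + (A3 * A3) *ᵥ u = 0) :
    (ipc (u'') u + ipc u' u' + (ipc u' u' + ipc u u'')).re
      = 2 * (∑ i, Complex.normSq ((u' + γ *ᵥ u) i))
        + 2 * ((∑ i, Complex.normSq ((A1 *ᵥ u) i)) + (∑ i, Complex.normSq ((A2 *ᵥ u) i))
            + (∑ i, Complex.normSq ((A3 *ᵥ u) i))) := by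
  have hzero : ipc u ((u'' + γ' *ᵥ u + γ *ᵥ u') + γ *ᵥ (u' + γ *ᵥ u)
      + (A1 * A1) *ᵥ u + (A2 * A2) *ᵥ u + (A3 * A3) *ᵥ u) = 0 := by
    rw [hode]; simp [ipc]
  simp only [ipc_add_right] at hzero
  -- skew rewrites
  have e1 : (ipc u (γ' *ᵥ u)).re = 0 := by
    have ha : (ipc u (γ' *ᵥ u)).re = -(ipc (γ' *ᵥ u) u).re := by
      rw [ipc_skew hγ', neg_re]
    have hb : (ipc (γ' *ᵥ u) u).re = (ipc u (γ' *ᵥ u)).re := re_ipc_comm _ _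
    linarith
  have e2 : (ipc u (γ *ᵥ u')).re = -(ipc u' (γ *ᵥ u)).re := by
    rw [ipc_skew hγ u u']; rw [neg_re, re_ipc_comm]
  have e3 : (ipc u (γ *ᵥ (u' + γ *ᵥ u))).re
      = -(ipc u' (γ *ᵥ u)).re - (ipc (γ *ᵥ u) (γ *ᵥ u)).re := by
    rw [ipc_skew hγ, ipc_add_right, neg_re, add_re, re_ipc_comm (γ *ᵥ u) u']
    ring
  have sq : ∀ (A : Matrix (Fin n) (Fin n) ℂ), Aᴴ = -A →
      (ipc u ((A * A) *ᵥ u)).re = -(ipc (A *ᵥ u) (A *ᵥ u)).re := by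
    intro A hA
    rw [← mulVec_mulVec, ipc_skew hA, neg_re]
  have e4 := sq A1 h1
  have e5 := sq A2 h2
  have e6 := sq A3 h3
  -- expand ipc w w
  have ew : (ipc (u' + γ *ᵥ u) (u' + γ *ᵥ u)).re
      = (ipc u' u').re + 2 * (ipc u' (γ *ᵥ u)).re + (ipc (γ *ᵥ u) (γ *ᵥ u)).re := by
    rw [ipc_add_left, ipc_add_right, ipc_add_right, add_re, add_re, add_re,
      re_ipc_comm (γ *ᵥ u) u']
    ring
  -- normSq sums to ipc re
  have ns : ∀ (x : Fin n → ℂ), (∑ i, Complex.normSq (x i)) = (ipc x x).re := by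
    intro x; rw [ipc_self]; simp
  rw [ns, ns, ns, ns, ew]
  have hre := congrArg Complex.re hzero
  simp only [add_re, Complex.zero_re] at hre
  simp only [add_re]
  rw [re_ipc_comm u'' u]
  linarith

lemma HasDerivAt.cconj {f : ℝ → ℂ} {d : ℂ} {z : ℝ} (h : HasDerivAt f d z) :
    HasDerivAt (fun t => (starRingEnd ℂ) (f t)) ((starRingEnd ℂ) d) z := by
  exact (Complex.conjCLE.toContinuousLinearMap.hasFDerivAt.comp_hasDerivAt z h)

lemma HasDerivAt.creal {f : ℝ → ℂ} {d : ℂ} {z : ℝ} (h : HasDerivAt f d z) :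
    HasDerivAt (fun t => (f t).re) d.re z := by
  exact (Complex.reCLM.hasFDerivAt.comp_hasDerivAt z h)

lemma skew_sub_smul {n : ℕ} {M : Matrix (Fin n) (Fin n) ℂ} (h : Mᴴ = -M) (x : ℝ) :
    (M - (Complex.I * (x:ℂ)) • (1 : Matrix (Fin n) (Fin n) ℂ))ᴴ
      = -(M - (Complex.I * (x:ℂ)) • (1 : Matrix (Fin n) (Fin n) ℂ)) := by
  rw [conjTranspose_sub, h, conjTranspose_smul, conjTranspose_one]
  simp [Complex.star_def, _root_.map_mul, Complex.conj_ofReal]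
  ext i j
  simp [Matrix.sub_apply, Matrix.neg_apply, Matrix.smul_apply]
  ring

/-- Convexity of `‖v‖²` for solutions of `D₁*D₁ v = 0`. With
`γ = T0 - ic` and skew-hermitian `T0, T1, T2, T3`, any solution of
`(v' + γv)' + γ(v' + γv) + Σⱼ (Tⱼ - ixⱼ)² v = 0` satisfies
`(d²/dz²)‖v‖² = 2‖v' + γv‖² + 2Σⱼ‖(Tⱼ - ixⱼ)v‖² ≥ 0`, so `‖v‖²` is convex. -/
theorem norm_squared_convexity {n : ℕ} (a b : ℝ) (hab : a < b)
    (T0 T0' T1 T2 T3 : ℝ → Matrix (Fin n) (Fin n) ℂ)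
    (hT0 : ∀ z ∈ Ioo a b, ∀ i j, HasDerivAt (fun t => T0 t i j) (T0' z i j) z)
    (hT1 : ∀ i j, ContinuousOn (fun z => T1 z i j) (Ioo a b))
    (hT2 : ∀ i j, ContinuousOn (fun z => T2 z i j) (Ioo a b))
    (hT3 : ∀ i j, ContinuousOn (fun z => T3 z i j) (Ioo a b))
    (hskew : ∀ z ∈ Ioo a b,
        (T0 z)ᴴ = -T0 z ∧ (T1 z)ᴴ = -T1 z ∧ (T2 z)ᴴ = -T2 z ∧ (T3 z)ᴴ = -T3 z)
    (c x1 x2 x3 : ℝ)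
    (v v' v'' : ℝ → Fin n → ℂ)
    (hv : ∀ z ∈ Ioo a b, ∀ i, HasDerivAt (fun t => v t i) (v' z i) z)
    (hv' : ∀ z ∈ Ioo a b, ∀ i, HasDerivAt (fun t => v' t i) (v'' z i) z)
    (hode : ∀ z ∈ Ioo a b,
        (v'' z + (T0' z).mulVec (v z)
            + (T0 z - (Complex.I * ((c : ℝ) : ℂ))
                • (1 : Matrix (Fin n) (Fin n) ℂ)).mulVec (v' z))
          + (T0 z - (Complex.I * ((c : ℝ) : ℂ))
                • (1 : Matrix (Fin n) (Fin n) ℂ)).mulVec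
              (v' z + (T0 z - (Complex.I * ((c : ℝ) : ℂ))
                • (1 : Matrix (Fin n) (Fin n) ℂ)).mulVec (v z))
          + ((T1 z - (Complex.I * ((x1 : ℝ) : ℂ)) • (1 : Matrix (Fin n) (Fin n) ℂ))
              * (T1 z - (Complex.I * ((x1 : ℝ) : ℂ)) • (1 : Matrix (Fin n) (Fin n) ℂ))).mulVec (v z)
          + ((T2 z - (Complex.I * ((x2 : ℝ) : ℂ)) • (1 : Matrix (Fin n) (Fin n) ℂ))
              * (T2 z - (Complex.I * ((x2 : ℝ) : ℂ)) • (1 : Matrix (Fin n) (Fin n) ℂ))).mulVec (v z)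
          + ((T3 z - (Complex.I * ((x3 : ℝ) : ℂ)) • (1 : Matrix (Fin n) (Fin n) ℂ))
              * (T3 z - (Complex.I * ((x3 : ℝ) : ℂ)) • (1 : Matrix (Fin n) (Fin n) ℂ))).mulVec (v z)
          = 0) :
    (∀ z ∈ Ioo a b,
      HasDerivAt (deriv (fun t => ∑ i, Complex.normSq (v t i)))
        (2 * (∑ i, Complex.normSq
            ((v' z + (T0 z - (Complex.I * ((c : ℝ) : ℂ))
                • (1 : Matrix (Fin n) (Fin n) ℂ)).mulVec (v z)) i))
          + 2 * ((∑ i, Complex.normSq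
                (((T1 z - (Complex.I * ((x1 : ℝ) : ℂ))
                  • (1 : Matrix (Fin n) (Fin n) ℂ)).mulVec (v z)) i))
              + (∑ i, Complex.normSq
                (((T2 z - (Complex.I * ((x2 : ℝ) : ℂ))
                  • (1 : Matrix (Fin n) (Fin n) ℂ)).mulVec (v z)) i))
              + (∑ i, Complex.normSq
                (((T3 z - (Complex.I * ((x3 : ℝ) : ℂ))
                  • (1 : Matrix (Fin n) (Fin n) ℂ)).mulVec (v z)) i)))) z
      ∧ 0 ≤ 2 * (∑ i, Complex.normSq
            ((v' z + (T0 z - (Complex.I * ((c : ℝ) : ℂ))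
                • (1 : Matrix (Fin n) (Fin n) ℂ)).mulVec (v z)) i))
          + 2 * ((∑ i, Complex.normSq
                (((T1 z - (Complex.I * ((x1 : ℝ) : ℂ))
                  • (1 : Matrix (Fin n) (Fin n) ℂ)).mulVec (v z)) i))
              + (∑ i, Complex.normSq
                (((T2 z - (Complex.I * ((x2 : ℝ) : ℂ))
                  • (1 : Matrix (Fin n) (Fin n) ℂ)).mulVec (v z)) i))
              + (∑ i, Complex.normSq
                (((T3 z - (Complex.I * ((x3 : ℝ) : ℂ))
                  • (1 : Matrix (Fin n) (Fin n) ℂ)).mulVec (v z)) i)))) ∧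
    ConvexOn ℝ (Ioo a b) (fun t => ∑ i, Complex.normSq (v t i)) := by
  set f : ℝ → ℝ := fun t => ∑ i, Complex.normSq (v t i) with hf
  set γ : ℝ → Matrix (Fin n) (Fin n) ℂ :=
    fun z => T0 z - (Complex.I * ((c : ℝ) : ℂ)) • (1 : Matrix (Fin n) (Fin n) ℂ) with hγdef
  set A1 : ℝ → Matrix (Fin n) (Fin n) ℂ :=
    fun z => T1 z - (Complex.I * ((x1 : ℝ) : ℂ)) • (1 : Matrix (Fin n) (Fin n) ℂ) with hA1def
  set A2 : ℝ → Matrix (Fin n) (Fin n) ℂ :=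
    fun z => T2 z - (Complex.I * ((x2 : ℝ) : ℂ)) • (1 : Matrix (Fin n) (Fin n) ℂ) with hA2def
  set A3 : ℝ → Matrix (Fin n) (Fin n) ℂ :=
    fun z => T3 z - (Complex.I * ((x3 : ℝ) : ℂ)) • (1 : Matrix (Fin n) (Fin n) ℂ) with hA3def
  set g : ℝ → ℝ := fun z => (ipc (v' z) (v z) + ipc (v z) (v' z)).re with hg
  -- first derivative
  have hd1 : ∀ z ∈ Ioo a b, HasDerivAt f (g z) z := by
    intro z hz
    have hsum : HasDerivAt (fun t => ∑ i, (starRingEnd ℂ) (v t i) * v t i)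
        (∑ i, ((starRingEnd ℂ) (v' z i) * v z i + (starRingEnd ℂ) (v z i) * v' z i)) z :=
      HasDerivAt.fun_sum fun i _ => ((hv z hz i).cconj.mul (hv z hz i))
    have hre := hsum.creal
    have hfun : (fun t => (∑ i, (starRingEnd ℂ) (v t i) * v t i).re) = f := by
      funext t
      rw [Complex.re_sum]
      exact Finset.sum_congr rfl fun i _ => by
        rw [← Complex.normSq_eq_conj_mul_self, Complex.ofReal_re]
    rw [← hfun]
    convert hre using 1
    simp [hg, ipc, Finset.sum_add_distrib, Complex.re_sum]
  -- second derivative of the inner function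
  have hd2 : ∀ z ∈ Ioo a b, HasDerivAt g
      ((ipc (v'' z) (v z) + ipc (v' z) (v' z) + (ipc (v' z) (v' z) + ipc (v z) (v'' z))).re) z := by
    intro z hz
    have hs1 : HasDerivAt (fun t => ∑ i, (starRingEnd ℂ) (v' t i) * v t i)
        (∑ i, ((starRingEnd ℂ) (v'' z i) * v z i + (starRingEnd ℂ) (v' z i) * v' z i)) z :=
      HasDerivAt.fun_sum fun i _ => ((hv' z hz i).cconj.mul (hv z hz i))
    have hs2 : HasDerivAt (fun t => ∑ i, (starRingEnd ℂ) (v t i) * v' t i)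
        (∑ i, ((starRingEnd ℂ) (v' z i) * v' z i + (starRingEnd ℂ) (v z i) * v'' z i)) z :=
      HasDerivAt.fun_sum fun i _ => ((hv z hz i).cconj.mul (hv' z hz i))
    have hre := (hs1.add hs2).creal
    convert hre using 1
    all_goals simp [hg, ipc, Finset.sum_add_distrib, Complex.re_sum]
  -- skewness facts
  have hskewγ : ∀ z ∈ Ioo a b, (γ z)ᴴ = -(γ z) := fun z hz =>
    skew_sub_smul (hskew z hz).1 c
  have hskewA1 : ∀ z ∈ Ioo a b, (A1 z)ᴴ = -(A1 z) := fun z hz =>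
    skew_sub_smul (hskew z hz).2.1 x1
  have hskewA2 : ∀ z ∈ Ioo a b, (A2 z)ᴴ = -(A2 z) := fun z hz =>
    skew_sub_smul (hskew z hz).2.2.1 x2
  have hskewA3 : ∀ z ∈ Ioo a b, (A3 z)ᴴ = -(A3 z) := fun z hz =>
    skew_sub_smul (hskew z hz).2.2.2 x3
  have hskewT0' : ∀ z ∈ Ioo a b, (T0' z)ᴴ = -(T0' z) := by
    intro z hz
    ext i j
    have h1 : HasDerivAt (fun t => (starRingEnd ℂ) (T0 t j i))
        ((starRingEnd ℂ) (T0' z j i)) z := (hT0 z hz j i).cconj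
    have h2 : HasDerivAt (fun t => -(T0 t i j)) (-(T0' z i j)) z := (hT0 z hz i j).neg
    have heq : (fun t => (starRingEnd ℂ) (T0 t j i)) =ᶠ[nhds z] (fun t => -(T0 t i j)) := by
      filter_upwards [isOpen_Ioo.mem_nhds hz] with t ht
      have h3 := congrFun (congrFun (hskew t ht).1 i) j
      simpa [Matrix.conjTranspose_apply, Matrix.neg_apply] using h3
    have h4 : HasDerivAt (fun t => (starRingEnd ℂ) (T0 t j i)) (-(T0' z i j)) z :=
      h2.congr_of_eventuallyEq heq
    have h5 := h1.unique h4
    simpa [Matrix.conjTranspose_apply, Matrix.neg_apply] using h5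
  -- the main second-derivative fact
  have hmain : ∀ z ∈ Ioo a b, HasDerivAt (deriv f)
      (2 * (∑ i, Complex.normSq ((v' z + (γ z).mulVec (v z)) i))
        + 2 * ((∑ i, Complex.normSq (((A1 z).mulVec (v z)) i))
            + (∑ i, Complex.normSq (((A2 z).mulVec (v z)) i))
            + (∑ i, Complex.normSq (((A3 z).mulVec (v z)) i)))) z := by
    intro z hz
    have hEq : deriv f =ᶠ[nhds z] g := by
      filter_upwards [isOpen_Ioo.mem_nhds hz] with t ht
      exact (hd1 t ht).deriv
    have hD := (hd2 z hz).congr_of_eventuallyEq hEq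
    have halg := key_algebra (T0' z) (γ z) (A1 z) (A2 z) (A3 z)
      (hskewT0' z hz) (hskewγ z hz) (hskewA1 z hz) (hskewA2 z hz) (hskewA3 z hz)
      (v z) (v' z) (v'' z) (hode z hz)
    rw [← halg]
    exact hD
  have hnn : ∀ z, 0 ≤ 2 * (∑ i, Complex.normSq ((v' z + (γ z).mulVec (v z)) i))
        + 2 * ((∑ i, Complex.normSq (((A1 z).mulVec (v z)) i))
            + (∑ i, Complex.normSq (((A2 z).mulVec (v z)) i))
            + (∑ i, Complex.normSq (((A3 z).mulVec (v z)) i))) := by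
    intro z
    have hns : ∀ (x : Fin n → ℂ), 0 ≤ ∑ i, Complex.normSq (x i) := fun x =>
      Finset.sum_nonneg fun i _ => Complex.normSq_nonneg _
    have := hns (v' z + (γ z).mulVec (v z))
    have := hns ((A1 z).mulVec (v z))
    have := hns ((A2 z).mulVec (v z))
    have := hns ((A3 z).mulVec (v z))
    linarith
  refine ⟨fun z hz => ⟨hmain z hz, hnn z⟩, ?_⟩
  refine convexOn_of_deriv2_nonneg' (convex_Ioo a b)
    (fun z hz => ((hd1 z hz).differentiableAt).differentiableWithinAt)
    (fun z hz => ((hmain z hz).differentiableAt).differentiableWithinAt) ?_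
  intro x hx
  have h2 : deriv^[2] f x = deriv (deriv f) x := by
    simp [Function.iterate_succ, Function.iterate_zero, Function.comp]
  rw [h2, (hmain x hx).deriv]
  exact hnn x
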